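/- Consider the hybrid setup, with λ_min > 0 and M := max(1−δ, e^{−λ_min}) ∈ (0,1). Assume lim_{n→∞} exp(𝓛·M^{−1}·∑_{j=0}^{n}(b_j−a_j))·(M + μ*·𝓛)^n = 0. Then sup_{t ∈ [a_n,b_n]} ‖ε_n(t)‖ → 0 as n → ∞. -/

import Mathlib

open scoped RealInnerProductSpace

lemma aux_eig {N : ℕ} (B : Matrix (Fin N) (Fin N) ℝ) (hB : B.IsHermitian) (j : Fin N) :
    Matrix.toEuclideanCLM (𝕜 := ℝ) B (hB.eigenvectorBasis j)
      = hB.eigenvalues j • hB.eigenvectorBasis j := by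
  apply (WithLp.equiv 2 _).injective
  simp [Matrix.ofLp_toEuclideanCLM, Matrix.toLin'_apply, hB.mulVec_eigenvectorBasis j]

lemma aux_repr {N : ℕ} (B : Matrix (Fin N) (Fin N) ℝ) (hB : B.IsHermitian)
    (x : EuclideanSpace ℝ (Fin N)) (i : Fin N) :
    hB.eigenvectorBasis.repr (Matrix.toEuclideanCLM (𝕜 := ℝ) B x) i
      = hB.eigenvalues i * hB.eigenvectorBasis.repr x i := by
  set e := hB.eigenvectorBasis
  conv_lhs => rw [← e.sum_repr x]
  rw [map_sum, map_sum]
  simp +zetaDelta only [map_smul, aux_eig B hB]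
  simp +zetaDelta only [e.repr_self]
  rw [WithLp.ofLp_sum, Finset.sum_apply]
  simp [EuclideanSpace.single_apply, mul_comm]

lemma aux_psd {N : ℕ} (B : Matrix (Fin N) (Fin N) ℝ) (hB : B.IsHermitian)
    (hpos : ∀ i, 0 ≤ hB.eigenvalues i) (x : EuclideanSpace ℝ (Fin N)) :
    0 ≤ ⟪x, Matrix.toEuclideanCLM (𝕜 := ℝ) B x⟫ := by
  set e := hB.eigenvectorBasis
  rw [← e.repr.inner_map_map x (Matrix.toEuclideanCLM (𝕜 := ℝ) B x)]
  rw [PiLp.inner_apply]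
  apply Finset.sum_nonneg
  intro i _
  simp +zetaDelta only [RCLike.inner_apply, conj_trivial, aux_repr B hB x i]
  have := hpos i
  nlinarith [sq_nonneg (e.repr x i)]

lemma aux_op {N : ℕ} (B : Matrix (Fin N) (Fin N) ℝ) (hB : B.IsHermitian)
    (c d : ℝ) (hd : 0 ≤ d) (hev : ∀ i, |1 - c * hB.eigenvalues i| ≤ d)
    (x : EuclideanSpace ℝ (Fin N)) :
    ‖Matrix.toEuclideanCLM (𝕜 := ℝ) (1 - c • B) x‖ ≤ d * ‖x‖ := by
  set e := hB.eigenvectorBasis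
  have hmap : Matrix.toEuclideanCLM (𝕜 := ℝ) (1 - c • B) x
      = x - c • Matrix.toEuclideanCLM (𝕜 := ℝ) B x := by
    simp [map_sub, map_smul]
  rw [hmap, ← e.repr.norm_map (x - c • Matrix.toEuclideanCLM (𝕜 := ℝ) B x),
    ← e.repr.norm_map x, EuclideanSpace.norm_eq, EuclideanSpace.norm_eq,
    ← Real.sqrt_sq hd, ← Real.sqrt_mul (by positivity)]
  apply Real.sqrt_le_sqrt
  rw [Finset.mul_sum]
  apply Finset.sum_le_sum
  intro i _
  have hri : e.repr (x - c • Matrix.toEuclideanCLM (𝕜 := ℝ) B x) i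
      = (1 - c * hB.eigenvalues i) * e.repr x i := by
    simp +zetaDelta [map_sub, map_smul, aux_repr B hB x i]; ring
  rw [hri]
  simp only [Real.norm_eq_abs, abs_mul, mul_pow]
  exact mul_le_mul_of_nonneg_right
    (pow_le_pow_left₀ (abs_nonneg _) (hev i) 2) (sq_nonneg _)
lemma aux_gronwall {N : ℕ} (T : EuclideanSpace ℝ (Fin N) →L[ℝ] EuclideanSpace ℝ (Fin N))
    (hT : ∀ x, 0 ≤ ⟪x, T x⟫) (γ : ℝ → ℝ) (hγ0 : ∀ t, 0 ≤ γ t)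
    (L : ℝ) (hL : 0 < L) (a b : ℝ) (hab : a ≤ b)
    (ε g : ℝ → EuclideanSpace ℝ (Fin N))
    (hode : ∀ t ∈ Set.Icc a b, HasDerivAt ε (-(γ t) • T (ε t) + g t) t)
    (hg : ∀ t ∈ Set.Icc a b, ‖g t‖ ≤ L * ‖ε t‖) :
    ∀ t ∈ Set.Icc a b, ‖ε t‖ ≤ Real.exp (L * (t - a)) * ‖ε a‖ := by
  set v : ℝ → EuclideanSpace ℝ (Fin N) := fun t => -(γ t) • T (ε t) + g t with hv
  set F : ℝ → ℝ := fun t => Real.exp (-(2 * L) * t) * ⟪ε t, ε t⟫ with hFdef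
  have hF : ∀ t ∈ Set.Icc a b, HasDerivAt F
      (Real.exp (-(2 * L) * t) * (-(2 * L) * 1) * ⟪ε t, ε t⟫
        + Real.exp (-(2 * L) * t) * (⟪ε t, v t⟫ + ⟪v t, ε t⟫)) t := by
    intro t ht
    have hexp : HasDerivAt (fun s => Real.exp (-(2 * L) * s))
        (Real.exp (-(2 * L) * t) * (-(2 * L) * 1)) t :=
      ((hasDerivAt_id t).const_mul (-(2 * L))).exp
    have hinner : HasDerivAt (fun s => (⟪ε s, ε s⟫ : ℝ))
        (⟪ε t, v t⟫ + ⟪v t, ε t⟫) t :=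
      HasDerivAt.inner ℝ (hode t ht) (hode t ht)
    exact hexp.mul hinner
  have hnonpos : ∀ t ∈ Set.Icc a b,
      Real.exp (-(2 * L) * t) * (-(2 * L) * 1) * ⟪ε t, ε t⟫
        + Real.exp (-(2 * L) * t) * (⟪ε t, v t⟫ + ⟪v t, ε t⟫) ≤ 0 := by
    intro t ht
    have h1 : (⟪ε t, v t⟫ : ℝ) ≤ L * ‖ε t‖ ^ 2 := by
      have : (⟪ε t, v t⟫ : ℝ) = -(γ t) * ⟪ε t, T (ε t)⟫ + ⟪ε t, g t⟫ := by
        rw [hv]; simp [inner_add_right, real_inner_smul_right, Finset.mul_sum, mul_left_comm]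
      rw [this]
      have h2 : (⟪ε t, g t⟫ : ℝ) ≤ L * ‖ε t‖ ^ 2 := by
        calc (⟪ε t, g t⟫ : ℝ) ≤ ‖ε t‖ * ‖g t‖ := real_inner_le_norm _ _
          _ ≤ ‖ε t‖ * (L * ‖ε t‖) :=
            mul_le_mul_of_nonneg_left (hg t ht) (norm_nonneg _)
          _ = L * ‖ε t‖ ^ 2 := by ring
      nlinarith [hT (ε t), hγ0 t]
    have h1' : (⟪v t, ε t⟫ : ℝ) ≤ L * ‖ε t‖ ^ 2 := by
      rw [real_inner_comm]; exact h1
    have hee : (⟪ε t, ε t⟫ : ℝ) = ‖ε t‖ ^ 2 := real_inner_self_eq_norm_sq _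
    have hexp_pos : 0 < Real.exp (-(2 * L) * t) := Real.exp_pos _
    rw [hee]
    nlinarith [sq_nonneg (‖ε t‖)]
  have hanti : AntitoneOn F (Set.Icc a b) := by
    apply antitoneOn_of_deriv_nonpos (convex_Icc a b)
    · exact fun t ht => (hF t ht).continuousAt.continuousWithinAt
    · intro t ht
      rw [interior_Icc] at ht
      exact (hF t (Set.Ioo_subset_Icc_self ht)).differentiableAt.differentiableWithinAt
    · intro t ht
      rw [interior_Icc] at ht
      rw [(hF t (Set.Ioo_subset_Icc_self ht)).deriv]
      exact hnonpos t (Set.Ioo_subset_Icc_self ht)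
  intro t ht
  have hFle : F t ≤ F a := hanti ⟨le_rfl, hab⟩ ht ht.1
  have hee : ∀ s, (⟪ε s, ε s⟫ : ℝ) = ‖ε s‖ ^ 2 := fun s => real_inner_self_eq_norm_sq _
  have h2 : ‖ε t‖ ^ 2 ≤ (Real.exp (L * (t - a)) * ‖ε a‖) ^ 2 := by
    have hFle' : Real.exp (-(2 * L) * t) * ‖ε t‖ ^ 2
        ≤ Real.exp (-(2 * L) * a) * ‖ε a‖ ^ 2 := by
      simpa [hFdef, hee] using hFle
    have hkey : (Real.exp (L * (t - a)) * ‖ε a‖) ^ 2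
        = Real.exp (2 * L * t) * (Real.exp (-(2 * L) * a) * ‖ε a‖ ^ 2) := by
      have hx : Real.exp (L * (t - a)) ^ 2
          = Real.exp (2 * L * t) * Real.exp (-(2 * L) * a) := by
        rw [sq, ← Real.exp_add, ← Real.exp_add]; ring_nf
      rw [mul_pow, hx, mul_assoc]
    have hepos : 0 < Real.exp (2 * L * t) := Real.exp_pos _
    rw [hkey]
    calc ‖ε t‖ ^ 2 = Real.exp (2 * L * t) * (Real.exp (-(2 * L) * t) * ‖ε t‖ ^ 2) := by
          rw [← mul_assoc, ← Real.exp_add]; ring_nf; simp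
      _ ≤ _ := mul_le_mul_of_nonneg_left hFle' hepos.le
  calc ‖ε t‖ = Real.sqrt (‖ε t‖ ^ 2) := (Real.sqrt_sq (norm_nonneg _)).symm
    _ ≤ Real.sqrt ((Real.exp (L * (t - a)) * ‖ε a‖) ^ 2) := Real.sqrt_le_sqrt h2
    _ = Real.exp (L * (t - a)) * ‖ε a‖ := Real.sqrt_sq (by positivity)

/-- hybrid setup (see statement 11) with `λmin > 0` and
`M = max (1-δ) e^{-λmin} ∈ (0,1)`.  If
`exp(𝓛 M⁻¹ ∑_{j=0}^{n} (b_j - a_j)) (M + μ* 𝓛)^n → 0` as `n → ∞`, then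
`sup_{t ∈ [a_n, b_n]} ‖ε_n(t)‖ → 0` as `n → ∞`. -/
theorem stmt15 {N : ℕ} (hN : 0 < N) (B : Matrix (Fin N) (Fin N) ℝ)
    (hB : B.IsHermitian) (lmin : ℝ)
    (hmin_le : ∀ i, lmin ≤ hB.eigenvalues i)
    (hmin_mem : ∃ i, hB.eigenvalues i = lmin)
    (hlmin_pos : 0 < lmin)
    (a b : ℕ → ℝ) (hab : ∀ j, a j ≤ b j) (hba : ∀ j, b j < a (j + 1))
    (μ : ℕ → ℝ) (hμdef : ∀ j, μ j = a (j + 1) - b j)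
    (μstar : ℝ) (hμstar : 0 < μstar) (hμle : ∀ j, μ j ≤ μstar)
    (γ : ℝ → ℝ) (hγc : Continuous γ) (hγ0 : ∀ t, 0 ≤ γ t)
    (δ : ℝ) (hδ0 : 0 < δ) (hδ1 : δ < 1)
    (L : ℝ) (hL : 0 < L)
    (γd : ℕ → ℝ)
    (hγd : ∀ j i, δ ≤ μ j * γd j * hB.eigenvalues i ∧ μ j * γd j * hB.eigenvalues i < 1)
    (ε g : ℕ → ℝ → EuclideanSpace ℝ (Fin N))
    (hode : ∀ j, ∀ t ∈ Set.Icc (a j) (b j),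
      HasDerivAt (ε j)
        (-(γ t) • (Matrix.toEuclideanCLM (𝕜 := ℝ) (n := Fin N) B (ε j t)) + g j t) t)
    (hg : ∀ j, ∀ t ∈ Set.Icc (a j) (b j), ‖g j t‖ ≤ L * ‖ε j t‖)
    (h : ℕ → EuclideanSpace ℝ (Fin N))
    (hjump : ∀ j, ε (j + 1) (a (j + 1)) =
      Matrix.toEuclideanCLM (𝕜 := ℝ) (n := Fin N) (1 - (μ j * γd j) • B) (ε j (b j))
        + μ j • h j)
    (hh : ∀ j, ‖h j‖ ≤ L * ‖ε j (b j)‖)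
    (M : ℝ) (hM : M = max (1 - δ) (Real.exp (-lmin)))
    (hlim : Filter.Tendsto
      (fun n => Real.exp (L * M⁻¹ * ∑ j ∈ Finset.range (n + 1), (b j - a j))
        * (M + μstar * L) ^ n) Filter.atTop (nhds 0)) :
    Filter.Tendsto (fun n => ⨆ t ∈ Set.Icc (a n) (b n), ‖ε n t‖)
      Filter.atTop (nhds 0) := by
  
  classical
  have hpsd : ∀ x : EuclideanSpace ℝ (Fin N),
      0 ≤ ⟪x, Matrix.toEuclideanCLM (𝕜 := ℝ) (n := Fin N) B x⟫ :=
    aux_psd B hB (fun i => le_trans hlmin_pos.le (hmin_le i))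
  have hMpos : 0 < M := lt_of_lt_of_le (Real.exp_pos (-lmin)) (hM ▸ le_max_right _ _)
  have hM1 : M < 1 := by
    rw [hM]
    apply max_lt
    · linarith
    · rw [← Real.exp_zero]
      exact Real.exp_lt_exp.mpr (by linarith)
  have hMinv : 1 ≤ M⁻¹ := (one_le_inv₀ hMpos).mpr hM1.le
  set C : ℝ := M + μstar * L with hC
  have hC0 : 0 < C := by
    have : 0 < μstar * L := mul_pos hμstar hL
    linarith
  have grw : ∀ n, ∀ t ∈ Set.Icc (a n) (b n),
      ‖ε n t‖ ≤ Real.exp (L * (t - a n)) * ‖ε n (a n)‖ := fun n =>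
    aux_gronwall _ hpsd γ hγ0 L hL (a n) (b n) (hab n) (ε n) (g n) (hode n) (hg n)
  have hμpos : ∀ j, 0 < μ j := fun j => by
    rw [hμdef j]; linarith [hba j]
  have hjmp : ∀ n, ‖ε (n + 1) (a (n + 1))‖ ≤ C * ‖ε n (b n)‖ := by
    intro n
    rw [hjump n]
    have hop : ‖Matrix.toEuclideanCLM (𝕜 := ℝ) (n := Fin N)
        (1 - (μ n * γd n) • B) (ε n (b n))‖ ≤ (1 - δ) * ‖ε n (b n)‖ := by
      apply aux_op B hB (μ n * γd n) (1 - δ) (by linarith)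
      intro i
      obtain ⟨h1, h2⟩ := hγd n i
      rw [abs_le]
      constructor <;> [linarith; linarith]
    have hsm : ‖μ n • h n‖ ≤ μstar * (L * ‖ε n (b n)‖) := by
      rw [norm_smul, Real.norm_eq_abs, abs_of_pos (hμpos n)]
      exact mul_le_mul (hμle n) (hh n) (norm_nonneg _) hμstar.le
    have h1δM : 1 - δ ≤ M := hM ▸ le_max_left _ _
    calc ‖Matrix.toEuclideanCLM (𝕜 := ℝ) (n := Fin N)
          (1 - (μ n * γd n) • B) (ε n (b n)) + μ n • h n‖
        ≤ ‖Matrix.toEuclideanCLM (𝕜 := ℝ) (n := Fin N)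
            (1 - (μ n * γd n) • B) (ε n (b n))‖ + ‖μ n • h n‖ := norm_add_le _ _
      _ ≤ (1 - δ) * ‖ε n (b n)‖ + μstar * (L * ‖ε n (b n)‖) := add_le_add hop hsm
      _ ≤ C * ‖ε n (b n)‖ := by
          rw [hC]
          nlinarith [norm_nonneg (ε n (b n))]
  set S : ℕ → ℝ := fun n => ∑ j ∈ Finset.range (n + 1), (b j - a j) with hS
  have hSnn : ∀ n, 0 ≤ S n :=
    fun n => Finset.sum_nonneg fun j _ => by linarith [hab j]
  have main : ∀ n, ∀ t ∈ Set.Icc (a n) (b n),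
      ‖ε n t‖ ≤ Real.exp (L * S n) * C ^ n * ‖ε 0 (a 0)‖ := by
    intro n
    induction n with
    | zero =>
      intro t ht
      have hS0 : S 0 = b 0 - a 0 := by simp [hS]
      calc ‖ε 0 t‖ ≤ Real.exp (L * (t - a 0)) * ‖ε 0 (a 0)‖ := grw 0 t ht
        _ ≤ Real.exp (L * S 0) * ‖ε 0 (a 0)‖ := by
            apply mul_le_mul_of_nonneg_right _ (norm_nonneg _)
            apply Real.exp_le_exp.mpr
            rw [hS0]
            have := ht.2
            nlinarith
        _ = Real.exp (L * S 0) * C ^ 0 * ‖ε 0 (a 0)‖ := by ring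
    | succ n ih =>
      intro t ht
      have hb : ‖ε n (b n)‖ ≤ Real.exp (L * S n) * C ^ n * ‖ε 0 (a 0)‖ :=
        ih (b n) ⟨hab n, le_rfl⟩
      have h1 : ‖ε (n + 1) (a (n + 1))‖
          ≤ C * (Real.exp (L * S n) * C ^ n * ‖ε 0 (a 0)‖) :=
        le_trans (hjmp n) (mul_le_mul_of_nonneg_left hb hC0.le)
      have hSsucc : S (n + 1) = S n + (b (n + 1) - a (n + 1)) := by
        rw [hS]; exact Finset.sum_range_succ _ _
      calc ‖ε (n + 1) t‖
          ≤ Real.exp (L * (t - a (n + 1))) * ‖ε (n + 1) (a (n + 1))‖ :=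
            grw (n + 1) t ht
        _ ≤ Real.exp (L * (b (n + 1) - a (n + 1)))
            * (C * (Real.exp (L * S n) * C ^ n * ‖ε 0 (a 0)‖)) := by
            apply mul_le_mul _ h1 (norm_nonneg _) (Real.exp_pos _).le
            apply Real.exp_le_exp.mpr
            have := ht.2
            nlinarith
        _ = Real.exp (L * S (n + 1)) * C ^ (n + 1) * ‖ε 0 (a 0)‖ := by
            rw [hSsucc, show L * (S n + (b (n + 1) - a (n + 1)))
              = L * S n + L * (b (n + 1) - a (n + 1)) from by ring,
              Real.exp_add, pow_succ]
            ring
  have hbound : ∀ n, (⨆ t ∈ Set.Icc (a n) (b n), ‖ε n t‖)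
      ≤ Real.exp (L * M⁻¹ * S n) * C ^ n * ‖ε 0 (a 0)‖ := by
    intro n
    have hbnn : 0 ≤ Real.exp (L * M⁻¹ * S n) * C ^ n * ‖ε 0 (a 0)‖ :=
      mul_nonneg (mul_nonneg (Real.exp_pos _).le (pow_nonneg hC0.le n))
        (norm_nonneg _)
    apply Real.iSup_le _ hbnn
    intro t
    apply Real.iSup_le _ hbnn
    intro ht
    refine le_trans (main n t ht) ?_
    apply mul_le_mul_of_nonneg_right _ (norm_nonneg _)
    apply mul_le_mul_of_nonneg_right _ (pow_nonneg hC0.le n)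
    apply Real.exp_le_exp.mpr
    nlinarith [mul_nonneg (mul_nonneg hL.le (hSnn n)) (sub_nonneg.mpr hMinv)]
  have hnn : ∀ n, 0 ≤ ⨆ t ∈ Set.Icc (a n) (b n), ‖ε n t‖ :=
    fun n => Real.iSup_nonneg fun t => Real.iSup_nonneg fun _ => norm_nonneg _
  have hlim' : Filter.Tendsto
      (fun n => Real.exp (L * M⁻¹ * S n) * C ^ n * ‖ε 0 (a 0)‖)
      Filter.atTop (nhds 0) := by
    have := hlim.mul_const (‖ε 0 (a 0)‖)
    simpa only [zero_mul] using this
  exact squeeze_zero hnn hbound hlim'
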